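/- Consider the group homomorphism Ψ from U(1) × SU(2) × SU(3) to U(2) × U(3) given by Ψ(c, g, h) = (c³·g, c^{−2}·h). Then the kernel of Ψ is exactly the cyclic subgroup generated by the element (ζ₂^{-1}·ζ₃^{-1}, ζ₂·1₂, ζ₃·1₃) = (ζ₆, −1₂, ζ₃·1₃), which has order 6. -/

import Mathlib

/-- `ζ n = exp(2πi/n)`, the standard primitive `n`-th root of unity in `ℂ`. -/
noncomputable def zeta (n : ℕ) : ℂ := Complex.exp (2 * Real.pi * Complex.I / n)

/-- The special unitary group `SU(n)`, as the subgroup of the unitary group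
`Matrix.unitaryGroup n ℂ` consisting of the matrices of determinant `1`. -/
noncomputable def SU (n : Type*) [DecidableEq n] [Fintype n] :
    Subgroup (Matrix.unitaryGroup n ℂ) :=
  MonoidHom.ker ((Units.map (Matrix.detMonoidHom : Matrix n n ℂ →* ℂ)).comp Unitary.toUnits)

lemma mem_SU_iff {n : Type*} [DecidableEq n] [Fintype n] (x : Matrix.unitaryGroup n ℂ) :
    x ∈ SU n ↔ (x : Matrix n n ℂ).det = 1 := by
  simp [SU, MonoidHom.mem_ker, Units.ext_iff]

lemma zeta_prim (n : ℕ) (hn : n ≠ 0) : IsPrimitiveRoot (zeta n) n := by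
  simpa [zeta] using Complex.isPrimitiveRoot_exp n hn

lemma zeta6_pow3 : zeta 6 ^ (3 : ℕ) = -1 := by
  rw [zeta, ← Complex.exp_nat_mul]
  have h : ((3:ℕ):ℂ) * (2 * (Real.pi:ℂ) * Complex.I / ((6:ℕ):ℂ)) = (Real.pi:ℂ) * Complex.I := by
    push_cast; ring
  rw [h, Complex.exp_pi_mul_I]

lemma zeta6_pow2 : zeta 6 ^ (2 : ℕ) = zeta 3 := by
  rw [zeta, zeta, ← Complex.exp_nat_mul]
  congr 1
  push_cast
  ring

lemma zeta6_pow6 : zeta 6 ^ (6 : ℕ) = 1 := (zeta_prim 6 (by norm_num)).pow_eq_one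

lemma zeta3_pow6 : zeta 3 ^ (6 : ℕ) = 1 := by
  rw [show (6:ℕ) = 3 * 2 by norm_num, pow_mul, (zeta_prim 3 (by norm_num)).pow_eq_one, one_pow]

lemma zeta_ne_zero (n : ℕ) : zeta n ≠ 0 := Complex.exp_ne_zero _

/-- reduce an integer power of a 6-th root of unity to a natural power. -/
lemma zpow_eq_toNat {a : ℂ} (ha : a ^ (6 : ℕ) = 1) (k : ℤ) :
    a ^ k = a ^ (k % 6).toNat := by
  have ha0 : a ≠ 0 := by
    intro h; rw [h] at ha; simp at ha
  have h6 : a ^ (6 : ℤ) = 1 := by exact_mod_cast ha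
  calc a ^ k = a ^ (6 * (k / 6) + k % 6) := by rw [Int.mul_ediv_add_emod]
    _ = (a ^ (6:ℤ)) ^ (k / 6) * a ^ (k % 6) := by rw [zpow_add₀ ha0, zpow_mul]
    _ = a ^ (k % 6) := by rw [h6, one_zpow, one_mul]
    _ = a ^ (k % 6).toNat := by
        rw [← zpow_natCast, Int.toNat_of_nonneg (Int.emod_nonneg k (by norm_num))]

/-- scalar multiplication of a unitary matrix by a circle element. -/
noncomputable def scalMul {n : Type*} [DecidableEq n] [Fintype n] (c : Circle)
    (g : Matrix.unitaryGroup n ℂ) : Matrix.unitaryGroup n ℂ :=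
  ⟨(c : ℂ) • (g : Matrix n n ℂ), by
    rw [Matrix.mem_unitaryGroup_iff, star_smul, Matrix.smul_mul, Matrix.mul_smul, smul_smul,
      g.prop.2]
    simp [Complex.mul_conj]⟩

@[simp] lemma scalMul_coe {n : Type*} [DecidableEq n] [Fintype n] (c : Circle)
    (g : Matrix.unitaryGroup n ℂ) :
    ((scalMul c g : Matrix.unitaryGroup n ℂ) : Matrix n n ℂ) = (c : ℂ) • (g : Matrix n n ℂ) := rfl

noncomputable def Psi : (Circle × SU (Fin 2) × SU (Fin 3)) →*
    Matrix.unitaryGroup (Fin 2) ℂ × Matrix.unitaryGroup (Fin 3) ℂ where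
  toFun x := (scalMul (x.1 ^ 3) x.2.1, scalMul (x.1⁻¹ ^ 2) x.2.2)
  map_one' := by
    refine Prod.ext ?_ ?_ <;> exact Subtype.ext (by simp)
  map_mul' x y := by
    refine Prod.ext (Subtype.ext ?_) (Subtype.ext ?_) <;>
      simp only [Prod.fst_mul, Prod.snd_mul, Matrix.UnitaryGroup.mul_val, scalMul_coe,
          Subgroup.coe_mul, Circle.coe_mul, Circle.coe_inv, mul_pow, mul_inv_rev] <;>
      rw [Matrix.smul_mul, Matrix.mul_smul, smul_smul] <;>
      · congr 1
        ring


lemma abs_zeta (n : ℕ) : ‖zeta n‖ = 1 := by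
  rw [zeta, Complex.norm_exp]
  have : (2 * (Real.pi:ℂ) * Complex.I / (n:ℂ)).re = 0 := by
    rw [show 2 * (Real.pi:ℂ) * Complex.I / (n:ℂ) = ((2 * Real.pi / n : ℝ) : ℂ) * Complex.I by
      push_cast; ring]
    simp
  rw [this, Real.exp_zero]

lemma zeta_mul_conj (n : ℕ) : zeta n * (starRingEnd ℂ) (zeta n) = 1 := by
  rw [Complex.mul_conj]
  norm_cast
  rw [Complex.normSq_eq_norm_sq, abs_zeta]
  norm_num

noncomputable def z6c : Circle := Circle.exp (Real.pi / 3)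

lemma z6c_coe : (z6c : ℂ) = zeta 6 := by
  rw [z6c, Circle.coe_exp, zeta]
  congr 1
  push_cast
  ring

noncomputable def g0 : ↥(SU (Fin 2)) :=
  ⟨⟨(-1 : Matrix (Fin 2) (Fin 2) ℂ), by
      rw [Matrix.mem_unitaryGroup_iff]; simp⟩, by
    rw [mem_SU_iff]
    simp [Matrix.det_neg]⟩

@[simp] lemma g0_coe : ((g0 : Matrix.unitaryGroup (Fin 2) ℂ) : Matrix (Fin 2) (Fin 2) ℂ) = -1 :=
  rfl

noncomputable def h0 : ↥(SU (Fin 3)) :=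
  ⟨⟨zeta 3 • (1 : Matrix (Fin 3) (Fin 3) ℂ), by
      rw [Matrix.mem_unitaryGroup_iff, star_smul, Matrix.smul_mul, Matrix.mul_smul, smul_smul]
      simp [zeta_mul_conj]⟩, by
    rw [mem_SU_iff]
    simp only [Matrix.det_smul, Matrix.det_one, mul_one, Fintype.card_fin]
    exact (zeta_prim 3 (by norm_num)).pow_eq_one⟩

@[simp] lemma h0_coe :
    ((h0 : Matrix.unitaryGroup (Fin 3) ℂ) : Matrix (Fin 3) (Fin 3) ℂ) = zeta 3 • 1 := rfl


@[simp, norm_cast] lemma Circle_coe_pow (z : Circle) (n : ℕ) :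
    ((z ^ n : Circle) : ℂ) = (z : ℂ) ^ n :=
  map_pow Circle.coeHom z n

/-- the generator of the kernel. -/
noncomputable def zel : Circle × ↥(SU (Fin 2)) × ↥(SU (Fin 3)) := (z6c, g0, h0)

lemma zel_pow1 (i : ℕ) : (((zel ^ i).1 : Circle) : ℂ) = zeta 6 ^ i := by
  have : (zel ^ i).1 = z6c ^ i := rfl
  rw [this, Circle_coe_pow, z6c_coe]

lemma zel_pow2 (i : ℕ) :
    (((zel ^ i).2.1 : Matrix.unitaryGroup (Fin 2) ℂ) : Matrix (Fin 2) (Fin 2) ℂ) =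
      (-1 : ℂ) ^ i • 1 := by
  have : (zel ^ i).2.1 = g0 ^ i := rfl
  rw [this]
  push_cast
  rw [g0_coe, show (-1 : Matrix (Fin 2) (Fin 2) ℂ) = (-1 : ℂ) • 1 by simp, smul_pow, one_pow]

lemma zel_pow3 (i : ℕ) :
    (((zel ^ i).2.2 : Matrix.unitaryGroup (Fin 3) ℂ) : Matrix (Fin 3) (Fin 3) ℂ) =
      zeta 3 ^ i • 1 := by
  have : (zel ^ i).2.2 = h0 ^ i := rfl
  rw [this]
  push_cast
  rw [h0_coe, smul_pow, one_pow]

lemma neg_one_pow6 : (-1 : ℂ) ^ (6 : ℕ) = 1 := by norm_num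

lemma key (x : Circle × ↥(SU (Fin 2)) × ↥(SU (Fin 3))) :
    x ∈ Psi.ker ↔ ∃ k : ℤ,
      (x.1 : ℂ) = zeta 6 ^ k ∧
      ((x.2.1 : Matrix.unitaryGroup (Fin 2) ℂ) : Matrix (Fin 2) (Fin 2) ℂ) =
        (-1 : ℂ) ^ k • (1 : Matrix (Fin 2) (Fin 2) ℂ) ∧
      ((x.2.2 : Matrix.unitaryGroup (Fin 3) ℂ) : Matrix (Fin 3) (Fin 3) ℂ) =
        zeta 3 ^ k • (1 : Matrix (Fin 3) (Fin 3) ℂ) := by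
  haveI : NeZero (6 : ℕ) := ⟨by norm_num⟩
  set c : ℂ := (x.1 : ℂ) with hcdef
  set G : Matrix (Fin 2) (Fin 2) ℂ := ((x.2.1 : Matrix.unitaryGroup (Fin 2) ℂ) :
    Matrix (Fin 2) (Fin 2) ℂ) with hGdef
  set H : Matrix (Fin 3) (Fin 3) ℂ := ((x.2.2 : Matrix.unitaryGroup (Fin 3) ℂ) :
    Matrix (Fin 3) (Fin 3) ℂ) with hHdef
  have hc0 : c ≠ 0 := Circle.coe_ne_zero x.1
  have hPsi1 : ((Psi x).1 : Matrix (Fin 2) (Fin 2) ℂ) = c ^ 3 • G := by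
    show ((x.1 ^ 3 : Circle) : ℂ) • G = c ^ 3 • G
    rw [Circle_coe_pow]
  have hPsi2 : ((Psi x).2 : Matrix (Fin 3) (Fin 3) ℂ) = (c⁻¹) ^ 2 • H := by
    show (((x.1⁻¹) ^ 2 : Circle) : ℂ) • H = (c⁻¹) ^ 2 • H
    rw [Circle_coe_pow, Circle.coe_inv]
  rw [MonoidHom.mem_ker]
  constructor
  · intro h
    have h1 : c ^ 3 • G = 1 := by
      rw [← hPsi1]
      exact congrArg (fun p => ((p.1 : Matrix (Fin 2) (Fin 2) ℂ))) h
    have h2 : (c⁻¹) ^ 2 • H = 1 := by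
      rw [← hPsi2]
      exact congrArg (fun p => ((p.2 : Matrix (Fin 3) (Fin 3) ℂ))) h
    have hG : G = (c ^ 3)⁻¹ • 1 := by
      rw [← h1, smul_smul, inv_mul_cancel₀ (pow_ne_zero 3 hc0), one_smul]
    have hH : H = c ^ 2 • 1 := by
      rw [← h2, smul_smul, show c ^ 2 * (c⁻¹) ^ 2 = 1 by field_simp, one_smul]
    have hdet : G.det = 1 := (mem_SU_iff _).mp x.2.1.prop
    have hc6 : c ^ 6 = 1 := by
      rw [hG, Matrix.det_smul, Matrix.det_one, mul_one, Fintype.card_fin, inv_pow,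
        ← pow_mul, inv_eq_one] at hdet
      exact hdet
    obtain ⟨i, hi6, hic⟩ := (zeta_prim 6 (by norm_num)).eq_pow_of_pow_eq_one hc6
    refine ⟨(i : ℤ), ?_, ?_, ?_⟩
    · rw [zpow_natCast, hic]
    · rw [zpow_natCast, hG, ← hic, ← pow_mul, mul_comm, pow_mul, zeta6_pow3, ← inv_pow,
        inv_neg_one]
    · rw [zpow_natCast, hH, ← hic, ← pow_mul, mul_comm, pow_mul, zeta6_pow2]
  · rintro ⟨k, hc, hG, hH⟩
    set i : ℕ := (k % 6).toNat with hidef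
    have hc' : c = zeta 6 ^ i := by rw [hc, zpow_eq_toNat zeta6_pow6]
    have hG' : G = (-1 : ℂ) ^ i • 1 := by rw [hG, zpow_eq_toNat neg_one_pow6]
    have hH' : H = zeta 3 ^ i • 1 := by rw [hH, zpow_eq_toNat zeta3_pow6]
    refine Prod.ext (Subtype.ext ?_) (Subtype.ext ?_)
    · rw [hPsi1, hc', hG', smul_smul, pow_right_comm, zeta6_pow3, ← mul_pow]
      norm_num
    · show ((Psi x).2 : Matrix (Fin 3) (Fin 3) ℂ) = 1
      rw [hPsi2, hc', hH', smul_smul, inv_pow, pow_right_comm, zeta6_pow2, ← inv_pow,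
        ← mul_pow, inv_mul_cancel₀ (zeta_ne_zero 3)]
      norm_num

lemma zel_mem_ker : zel ∈ Psi.ker := by
  rw [key]
  refine ⟨1, ?_, ?_, ?_⟩ <;> simp [zel, z6c_coe]

lemma ker_eq : Psi.ker = Subgroup.zpowers zel := by
  refine le_antisymm ?_ (Subgroup.zpowers_le.mpr zel_mem_ker)
  intro x hx
  obtain ⟨k, hc, hG, hH⟩ := (key x).mp hx
  rw [Subgroup.mem_zpowers_iff]
  refine ⟨(((k % 6).toNat : ℕ) : ℤ), ?_⟩
  rw [zpow_natCast]
  set i : ℕ := (k % 6).toNat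
  refine Prod.ext ?_ (Prod.ext (Subtype.ext (Subtype.ext ?_)) (Subtype.ext (Subtype.ext ?_)))
  · apply Circle.ext
    rw [zel_pow1, hc, zpow_eq_toNat zeta6_pow6]
  · rw [show (((zel ^ i).2.1 : Matrix.unitaryGroup (Fin 2) ℂ) : Matrix (Fin 2) (Fin 2) ℂ) =
      (-1 : ℂ) ^ i • 1 from zel_pow2 i, hG, zpow_eq_toNat neg_one_pow6]
  · rw [show (((zel ^ i).2.2 : Matrix.unitaryGroup (Fin 3) ℂ) : Matrix (Fin 3) (Fin 3) ℂ) =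
      zeta 3 ^ i • 1 from zel_pow3 i, hH, zpow_eq_toNat zeta3_pow6]

set_option maxHeartbeats 1000000 in
lemma orderOf_zel : orderOf zel = 6 := by
  have h1 : orderOf zel ∣ 6 := by
    apply orderOf_dvd_of_pow_eq_one
    refine Prod.ext (Circle.ext ?_) (Prod.ext (Subtype.ext (Subtype.ext ?_))
      (Subtype.ext (Subtype.ext ?_)))
    · rw [zel_pow1, zeta6_pow6]; rfl
    · rw [show (((zel ^ 6).2.1 : Matrix.unitaryGroup (Fin 2) ℂ) : Matrix (Fin 2) (Fin 2) ℂ) =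
        (-1 : ℂ) ^ (6:ℕ) • 1 from zel_pow2 6, neg_one_pow6, one_smul]; rfl
    · rw [show (((zel ^ 6).2.2 : Matrix.unitaryGroup (Fin 3) ℂ) : Matrix (Fin 3) (Fin 3) ℂ) =
        zeta 3 ^ (6:ℕ) • 1 from zel_pow3 6, zeta3_pow6, one_smul]; rfl
  have h2 : orderOf z6c = 6 := by
    have hi := orderOf_injective Circle.coeHom Circle.coe_injective z6c
    rw [show Circle.coeHom z6c = (z6c : ℂ) from rfl, z6c_coe] at hi
    rw [← hi, ← (zeta_prim 6 (by norm_num)).eq_orderOf]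
  have h3 : 6 ∣ orderOf zel := by
    rw [← h2]
    exact orderOf_map_dvd (MonoidHom.fst _ _) zel
  exact Nat.dvd_antisymm h1 h3

theorem kernel_of_additive_realization :
    ∃ Ψ : (Circle × SU (Fin 2) × SU (Fin 3)) →*
        Matrix.unitaryGroup (Fin 2) ℂ × Matrix.unitaryGroup (Fin 3) ℂ,
      (∀ x : Circle × SU (Fin 2) × SU (Fin 3),
        ((Ψ x).1 : Matrix (Fin 2) (Fin 2) ℂ) =
          (x.1 : ℂ) ^ (3 : ℤ) •
            ((x.2.1 : Matrix.unitaryGroup (Fin 2) ℂ) : Matrix (Fin 2) (Fin 2) ℂ) ∧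
        ((Ψ x).2 : Matrix (Fin 3) (Fin 3) ℂ) =
          (x.1 : ℂ) ^ (-2 : ℤ) •
            ((x.2.2 : Matrix.unitaryGroup (Fin 3) ℂ) : Matrix (Fin 3) (Fin 3) ℂ)) ∧
      (∀ x : Circle × SU (Fin 2) × SU (Fin 3),
        x ∈ Ψ.ker ↔ ∃ k : ℤ,
          (x.1 : ℂ) = zeta 6 ^ k ∧
          ((x.2.1 : Matrix.unitaryGroup (Fin 2) ℂ) : Matrix (Fin 2) (Fin 2) ℂ) =
            (-1 : ℂ) ^ k • (1 : Matrix (Fin 2) (Fin 2) ℂ) ∧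
          ((x.2.2 : Matrix.unitaryGroup (Fin 3) ℂ) : Matrix (Fin 3) (Fin 3) ℂ) =
            zeta 3 ^ k • (1 : Matrix (Fin 3) (Fin 3) ℂ)) ∧
      Nat.card Ψ.ker = 6 := by
  refine ⟨Psi, fun x => ⟨?_, ?_⟩, key, ?_⟩
  · show ((x.1 ^ 3 : Circle) : ℂ) • _ = _
    rw [Circle_coe_pow, ← zpow_natCast]
    norm_num
  · show (((x.1⁻¹) ^ 2 : Circle) : ℂ) • _ = _
    rw [Circle_coe_pow, Circle.coe_inv, inv_pow, ← zpow_natCast, ← zpow_neg]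
    norm_num
  · rw [ker_eq, Nat.card_zpowers, orderOf_zel]
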